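/- Let k be a finite field of characteristic ℓ, V a finite dimensional k-vector space, and G ≤ GL(V) a normal subgroup of a group G' ≤ GL(V) with index [G':G] prime to ℓ. If G is big (satisfies conditions (B1)–(B4)), then G' is big. -/

import Mathlib

/-!
STATEMENT 1.  `k` finite field of characteristic `ℓ`, `V` finite dimensional, `G ≤ GL(V)`
normal in `G' ≤ GL(V)` with index `[G':G]` prime to `ℓ`.  If `G` is big ((B1)–(B4)) then
`G'` is big.  Encodings as in the other files; (B1) is stated as: every normal subgroup
with `ℓ`-group quotient is everything.
-/

open Module

variable (k V : Type*)

section Defs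
variable [Field k] [AddCommGroup V] [Module k V]

/-- Conjugation action of `GL(V)` on `ad V = End(V)`. -/
def conjAd (g : (V →ₗ[k] V)ˣ) (f : V →ₗ[k] V) : V →ₗ[k] V :=
  (g : V →ₗ[k] V) * f * ((g⁻¹ : (V →ₗ[k] V)ˣ) : V →ₗ[k] V)

/-- The generalized eigenspace `V_{g,α}`. -/
def GenEig (g : V →ₗ[k] V) (α : k) : Submodule k V :=
  Module.End.maxGenEigenspace g α

/-- The canonical complement of `V_{g,α}`, the kernel of the projection `V ↠ V_{g,α}`. -/
noncomputable def CoGenEig (g : V →ₗ[k] V) (α : k) : Submodule k V :=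
  LinearMap.range ((g - α • 1) ^ Module.finrank k V)

/-- `W ⊆ End(V)` is stable under conjugation by elements of `G`. -/
def ConjStable (G : Subgroup (V →ₗ[k] V)ˣ) (W : Submodule k (V →ₗ[k] V)) : Prop :=
  ∀ g ∈ G, ∀ f ∈ W, conjAd k V g f ∈ W

/-- `W` is an irreducible `G`-submodule of `ad V = End(V)` (conjugation action). -/
def IsIrredAdSub (G : Subgroup (V →ₗ[k] V)ˣ) (W : Submodule k (V →ₗ[k] V)) : Prop :=
  W ≠ ⊥ ∧ ConjStable k V G W ∧
    ∀ W' ≤ W, ConjStable k V G W' → W' = ⊥ ∨ W' = W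

/-- Condition (B2): `V` is absolutely irreducible as a `G`-module. -/
def AbsIrred (G : Subgroup (V →ₗ[k] V)ˣ) : Prop :=
  (⊥ : Submodule k V) ≠ ⊤ ∧
  (∀ U : Submodule k V, (∀ g ∈ G, ∀ v ∈ U, (g : V →ₗ[k] V) v ∈ U) → U = ⊥ ∨ U = ⊤) ∧
  (∀ f : V →ₗ[k] V, (∀ g ∈ G, (g : V →ₗ[k] V) * f = f * (g : V →ₗ[k] V)) →
    ∃ c : k, f = c • 1)

/-- Condition (B3): `H¹(G, ad⁰V) = 0`, stated via 1-cocycles and 1-coboundaries for the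
conjugation action on traceless endomorphisms. -/
def H1AdZeroVanishes (G : Subgroup (V →ₗ[k] V)ˣ) : Prop :=
  ∀ c : G → (V →ₗ[k] V),
    (∀ g : G, LinearMap.trace k V (c g) = 0) →
    (∀ g h : G, c (g * h) = c g + conjAd k V (g : (V →ₗ[k] V)ˣ) (c h)) →
    ∃ f : V →ₗ[k] V, LinearMap.trace k V f = 0 ∧
      ∀ g : G, c g = conjAd k V (g : (V →ₗ[k] V)ˣ) f - f

/-- Condition (B4). -/
def B4 (G : Subgroup (V →ₗ[k] V)ˣ) : Prop :=
  ∀ W : Submodule k (V →ₗ[k] V), IsIrredAdSub k V G W →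
    ∃ g ∈ G, ∃ α : k, ∃ f ∈ W,
      Module.finrank k (GenEig k V (g : V →ₗ[k] V) α) = 1 ∧
      ∃ v ∈ GenEig k V (g : V →ₗ[k] V) α, f v ∉ CoGenEig k V (g : V →ₗ[k] V) α

end Defs

section Defs2
variable [Field k] [AddCommGroup V] [Module k V]

/-- Condition (B1): `G` has no nontrivial quotient of `ℓ`-power order. -/
def B1 (ℓ : ℕ) (G : Subgroup (V →ₗ[k] V)ˣ) : Prop :=
  ∀ (Q : Type) [Group Q] (φ : G →* Q), Function.Surjective φ → IsPGroup ℓ Q →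
    Subsingleton Q

/-- `G` is a big subgroup of `GL(V)`: conditions (B1)–(B4). -/
def IsBig (ℓ : ℕ) (G : Subgroup (V →ₗ[k] V)ˣ) : Prop :=
  B1 k V ℓ G ∧ AbsIrred k V G ∧ H1AdZeroVanishes k V G ∧ B4 k V G

end Defs2


section Helpers

variable {k V : Type*} [Field k] [AddCommGroup V] [Module k V]

lemma conjAd_add (g : (V →ₗ[k] V)ˣ) (a b : V →ₗ[k] V) :
    conjAd k V g (a + b) = conjAd k V g a + conjAd k V g b := by
  simp [conjAd, mul_add, add_mul]

lemma conjAd_zero (g : (V →ₗ[k] V)ˣ) : conjAd k V g 0 = 0 := by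
  simp [conjAd]

lemma conjAd_sub (g : (V →ₗ[k] V)ˣ) (a b : V →ₗ[k] V) :
    conjAd k V g (a - b) = conjAd k V g a - conjAd k V g b := by
  simp [conjAd, mul_sub, sub_mul]

lemma conjAd_smul (g : (V →ₗ[k] V)ˣ) (s : k) (a : V →ₗ[k] V) :
    conjAd k V g (s • a) = s • conjAd k V g a := by
  simp [conjAd, mul_smul_comm, smul_mul_assoc]

lemma conjAd_mul (g h : (V →ₗ[k] V)ˣ) (a : V →ₗ[k] V) :
    conjAd k V (g * h) a = conjAd k V g (conjAd k V h a) := by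
  simp [conjAd, mul_assoc]

lemma conjAd_sum {ι : Type*} (t : Finset ι) (g : (V →ₗ[k] V)ˣ) (F : ι → (V →ₗ[k] V)) :
    conjAd k V g (∑ i ∈ t, F i) = ∑ i ∈ t, conjAd k V g (F i) := by
  simp [conjAd, Finset.mul_sum, Finset.sum_mul]

lemma trace_conjAd [FiniteDimensional k V] (g : (V →ₗ[k] V)ˣ) (a : V →ₗ[k] V) :
    LinearMap.trace k V (conjAd k V g a) = LinearMap.trace k V a := by
  have h : ((g⁻¹ : (V →ₗ[k] V)ˣ) : V →ₗ[k] V) * (g : V →ₗ[k] V) = 1 := by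
    rw [← Units.val_mul, inv_mul_cancel, Units.val_one]
  calc LinearMap.trace k V ((g : V →ₗ[k] V) * a * ((g⁻¹ : (V →ₗ[k] V)ˣ) : V →ₗ[k] V))
      = LinearMap.trace k V (((g⁻¹ : (V →ₗ[k] V)ˣ) : V →ₗ[k] V) * ((g : V →ₗ[k] V) * a)) := by
        rw [← mul_assoc]; exact LinearMap.trace_mul_comm k _ _
    _ = LinearMap.trace k V a := by rw [← mul_assoc, h, one_mul]

end Helpers

theorem stmt1 {ℓ : ℕ} [Fact ℓ.Prime]
    [Field k] [Finite k] [CharP k ℓ]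
    [AddCommGroup V] [Module k V] [FiniteDimensional k V]
    (G G' : Subgroup (V →ₗ[k] V)ˣ) (hle : G ≤ G')
    (hnormal : ∀ g ∈ G', ∀ h ∈ G, g * h * g⁻¹ ∈ G)
    (hindex : ¬ (ℓ ∣ Subgroup.relIndex G G'))
    (hbig : IsBig k V ℓ G) :
    IsBig k V ℓ G' := by
  obtain ⟨hB1, hB2, hB3, hB4⟩ := hbig
  have hfinV : Finite V := Module.finite_of_finite k
  have hfinEnd : Finite (V →ₗ[k] V) := Finite.of_injective _ DFunLike.coe_injective
  haveI : Finite (V →ₗ[k] V)ˣ := inferInstance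
  haveI : (G.subgroupOf G').Normal := by
    constructor
    intro n hn g
    rw [Subgroup.mem_subgroupOf] at hn ⊢
    exact hnormal ↑g g.2 ↑n hn
  haveI : Fintype (G' ⧸ G.subgroupOf G') := Fintype.ofFinite _
  have hcardrel : Subgroup.relIndex G G' = Fintype.card (G' ⧸ G.subgroupOf G') := by
    rw [Subgroup.relIndex, Subgroup.index, Nat.card_eq_fintype_card]
  refine ⟨?_, ?_, ?_, ?_⟩
  · -- B1
    intro Q _ φ hsurj hp
    set ψ : G →* Q := φ.comp (Subgroup.inclusion hle) with hψ
    have hψ1 : ∀ x : G, ψ x = 1 := by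
      have hsub : Subsingleton ψ.range :=
        hB1 ψ.range ψ.rangeRestrict ψ.rangeRestrict_surjective (hp.to_subgroup ψ.range)
      intro x
      have h1 : ψ.rangeRestrict x = 1 := Subsingleton.elim _ _
      have := congrArg Subtype.val h1
      simpa using this
    have hker : G.subgroupOf G' ≤ φ.ker := by
      intro x hx
      rw [Subgroup.mem_subgroupOf] at hx
      have hxeq : Subgroup.inclusion hle ⟨(x : (V →ₗ[k] V)ˣ), hx⟩ = x := rfl
      have := hψ1 ⟨(x : (V →ₗ[k] V)ˣ), hx⟩
      rw [MonoidHom.mem_ker]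
      rw [hψ, MonoidHom.comp_apply, hxeq] at this
      exact this
    by_contra hns
    have : Nontrivial Q := not_subsingleton_iff_nontrivial.mp hns
    obtain ⟨q, hq⟩ := exists_ne (1 : Q)
    obtain ⟨n, hn⟩ := hp q
    have hdvd : ℓ ∣ orderOf q := by
      have h1 : orderOf q ∣ ℓ ^ n := orderOf_dvd_of_pow_eq_one hn
      obtain ⟨m, hm, hord⟩ := (Nat.dvd_prime_pow Fact.out).mp h1
      rcases Nat.eq_zero_or_pos m with hm0 | hm0
      · exfalso
        rw [hm0, pow_zero, orderOf_eq_one_iff] at hord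
        exact hq hord
      · rw [hord]
        exact dvd_pow_self ℓ hm0.ne'
    have h1 : φ.ker.index = Nat.card Q := by
      rw [Subgroup.index_ker]
      have hrt : φ.range = ⊤ := MonoidHom.range_eq_top.mpr hsurj
      rw [hrt]
      exact Nat.card_congr Subgroup.topEquiv.toEquiv
    have hcard : Nat.card Q ∣ Subgroup.relIndex G G' :=
      h1 ▸ Subgroup.index_dvd_of_le hker
    exact hindex (hdvd.trans ((orderOf_dvd_natCard q).trans hcard))
  · -- B2
    obtain ⟨h1, h2, h3⟩ := hB2
    exact ⟨h1, fun U hU => h2 U (fun g hg => hU g (hle hg)),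
      fun f hf => h3 f (fun g hg => hf g (hle hg))⟩
  · -- B3
    intro c htr hcoc
    obtain ⟨f, hft, hf⟩ := hB3 (fun h : G => c (Subgroup.inclusion hle h))
      (fun h => htr _) (by
        intro g h
        show c (Subgroup.inclusion hle (g * h)) = c (Subgroup.inclusion hle g) +
          conjAd k V (↑g) (c (Subgroup.inclusion hle h))
        rw [map_mul]
        exact hcoc (Subgroup.inclusion hle g) (Subgroup.inclusion hle h))
    set c₁ : G' → (V →ₗ[k] V) := fun x => c x - (conjAd k V ↑x f - f) with hc₁
    have hc₁coc : ∀ g h : G', c₁ (g * h) = c₁ g + conjAd k V ↑g (c₁ h) := by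
      intro g h
      have hmul : ((↑(g * h) : (V →ₗ[k] V)ˣ)) = (↑g : (V →ₗ[k] V)ˣ) * ↑h := rfl
      simp only [hc₁, hcoc g h, hmul, conjAd_mul, conjAd_sub, conjAd_add]
      abel
    have hc₁G : ∀ x : G', (x : (V →ₗ[k] V)ˣ) ∈ G → c₁ x = 0 := by
      intro x hx
      have hxeq : Subgroup.inclusion hle ⟨(x : (V →ₗ[k] V)ˣ), hx⟩ = x := rfl
      have := hf ⟨(x : (V →ₗ[k] V)ˣ), hx⟩
      rw [hxeq] at this
      simp [hc₁, this]
    have hc₁const : ∀ x y : G', (QuotientGroup.leftRel (G.subgroupOf G')) x y → c₁ x = c₁ y := by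
      intro x y hxy
      rw [QuotientGroup.leftRel_apply, Subgroup.mem_subgroupOf] at hxy
      have hyx : y = x * (x⁻¹ * y) := by group
      rw [hyx, hc₁coc, hc₁G _ hxy, conjAd_zero, add_zero]
    set d : G' ⧸ G.subgroupOf G' → (V →ₗ[k] V) := Quotient.lift c₁ hc₁const with hd
    have hdmk : ∀ x : G', d (QuotientGroup.mk x) = c₁ x := fun x => rfl
    set S : V →ₗ[k] V := ∑ q, d q with hS
    set n : ℕ := Fintype.card (G' ⧸ G.subgroupOf G') with hn
    have hkey : ∀ g : G', S = n • c₁ g + conjAd k V ↑g S := by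
      intro g
      have hshift : ∀ q : G' ⧸ G.subgroupOf G',
          d (QuotientGroup.mk g * q) = c₁ g + conjAd k V ↑g (d q) := by
        intro q
        induction q using Quotient.inductionOn with
        | h x =>
          have : (QuotientGroup.mk g * Quotient.mk _ x : G' ⧸ G.subgroupOf G') =
              QuotientGroup.mk (g * x) := rfl
          rw [this, hdmk, hc₁coc]
          rfl
      calc S = ∑ q, d (QuotientGroup.mk g * q) :=
            (Fintype.sum_equiv (Equiv.mulLeft (QuotientGroup.mk g)) _ _ (fun q => rfl)).symm
        _ = ∑ q, (c₁ g + conjAd k V ↑g (d q)) := by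
            exact Finset.sum_congr rfl (fun q _ => hshift q)
        _ = n • c₁ g + conjAd k V ↑g S := by
            rw [Finset.sum_add_distrib, Finset.sum_const, Finset.card_univ, ← conjAd_sum]
    have hn0 : (n : k) ≠ 0 := by
      rw [Ne, CharP.cast_eq_zero_iff k ℓ]
      intro hdvd
      exact hindex (hcardrel ▸ hdvd)
    have htrS : LinearMap.trace k V S = 0 := by
      have hq0 : ∀ q : G' ⧸ G.subgroupOf G', LinearMap.trace k V (d q) = 0 := by
        intro q
        induction q using Quotient.inductionOn with
        | h x =>
          have : d (Quotient.mk _ x) = c₁ x := rfl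
          rw [this, hc₁]
          simp only [map_sub, trace_conjAd, htr x, sub_self, sub_zero]
      rw [hS, map_sum]
      exact Finset.sum_eq_zero (fun q _ => hq0 q)
    refine ⟨f - (n : k)⁻¹ • S, ?_, ?_⟩
    · rw [map_sub, map_smul, hft, htrS, smul_zero, sub_zero]
    · intro g
      have hc₁g : c₁ g = (n : k)⁻¹ • S - (n : k)⁻¹ • conjAd k V ↑g S := by
        have h2 : (n : k) • c₁ g = S - conjAd k V ↑g S := by
          rw [Nat.cast_smul_eq_nsmul, eq_sub_iff_add_eq]
          exact (hkey g).symm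
        have := congrArg (fun x => (n : k)⁻¹ • x) h2
        simp only [smul_smul, inv_mul_cancel₀ hn0, one_smul, smul_sub] at this
        rw [this]
      have hcg : c g = c₁ g + (conjAd k V ↑g f - f) := by simp [hc₁]
      rw [hcg, hc₁g, conjAd_sub, conjAd_smul]
      abel
  · -- B4
    intro W hW
    obtain ⟨hWne, hWst, _⟩ := hW
    have hWstG : ConjStable k V G W := fun g hg => hWst g (hle hg)
    haveI : FiniteDimensional k (V →ₗ[k] V) := inferInstance
    set s : Set (Submodule k (V →ₗ[k] V)) :=
      {W' | W' ≤ W ∧ W' ≠ ⊥ ∧ ConjStable k V G W'} with hs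
    have hWs : W ∈ s := ⟨le_rfl, hWne, hWstG⟩
    set ns : Set ℕ := (fun W' : Submodule k (V →ₗ[k] V) => Module.finrank k W') '' s with hns
    have hnsne : ns.Nonempty := ⟨_, W, hWs, rfl⟩
    obtain ⟨W₀, hW₀s, hW₀rank⟩ := Nat.sInf_mem hnsne
    have hmin : ∀ W' ∈ s, Module.finrank k W₀ ≤ Module.finrank k W' := by
      intro W' h
      have h0 : Module.finrank k W₀ = sInf ns := hW₀rank
      rw [h0]
      exact Nat.sInf_le ⟨W', h, rfl⟩
    have hirr : IsIrredAdSub k V G W₀ := by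
      refine ⟨hW₀s.2.1, hW₀s.2.2, ?_⟩
      intro W' hle' hst'
      by_cases h : W' = ⊥
      · exact Or.inl h
      · refine Or.inr (Submodule.eq_of_le_of_finrank_eq hle' ?_)
        exact le_antisymm (Submodule.finrank_mono hle')
          (hmin _ ⟨hle'.trans hW₀s.1, h, hst'⟩)
    obtain ⟨g, hg, α, f, hfW₀, h1, v, hv, hnv⟩ := hB4 W₀ hirr
    exact ⟨g, hle hg, α, f, hW₀s.1 hfW₀, h1, v, hv, hnv⟩
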